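/- There exists a density f supported on [0,∞) that belongs to the long-tailed density class 𝓛₀, does not belong to the subexponential density class 𝓢₀, and is not almost decreasing. -/

import Mathlib

open MeasureTheory Filter Set

noncomputable section

/-- A probability density supported on `[0, ∞)`. -/
def IsDensity (f : ℝ → ℝ) : Prop :=
  Measurable f ∧ (∀ x < (0:ℝ), f x = 0) ∧ (∀ x : ℝ, 0 ≤ f x) ∧
    ∫ y in Set.Ioi (0:ℝ), f y = 1

/-- The long-tailed density class `𝓛₀`. -/
def LongTailedDensity (f : ℝ → ℝ) : Prop :=
  (∀ᶠ x in atTop, 0 < f x) ∧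
  ∀ t : ℝ, Tendsto (fun x => f (x + t) / f x) atTop (nhds 1)

/-- The subexponential density class `𝓢₀`. -/
def SubexpDensity (f : ℝ → ℝ) : Prop :=
  LongTailedDensity f ∧
  Tendsto (fun x => (∫ y in (0:ℝ)..x, f (x - y) * f y) / f x) atTop (nhds 2)

/-- `f` is almost decreasing: beyond some `x₀ ≥ 0` it is positive and the
ratios `f y / f x` for `x₀ ≤ x ≤ y` are bounded. -/
def AlmostDecreasing (f : ℝ → ℝ) : Prop :=
  ∃ x₀ : ℝ, 0 ≤ x₀ ∧ (∀ x : ℝ, x₀ ≤ x → 0 < f x) ∧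
    ∃ C : ℝ, ∀ x y : ℝ, x₀ ≤ x → x ≤ y → f y / f x ≤ C

def phi (x : ℝ) : ℝ := Real.sqrt x * (3/2 * Real.sin (Real.log x) - 2)

lemma factor_le (x : ℝ) : 3/2 * Real.sin (Real.log x) - 2 ≤ -(1/2) := by
  have := Real.sin_le_one (Real.log x); linarith

lemma factor_ge (x : ℝ) : -(7/2) ≤ 3/2 * Real.sin (Real.log x) - 2 := by
  have := Real.neg_one_le_sin (Real.log x); linarith

lemma phi_le (x : ℝ) : phi x ≤ -(1/2) * Real.sqrt x := by
  have h := factor_le x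
  have h0 := Real.sqrt_nonneg x
  calc phi x ≤ Real.sqrt x * (-(1/2)) := mul_le_mul_of_nonneg_left h h0
  _ = -(1/2) * Real.sqrt x := by ring

lemma phi_ge (x : ℝ) : -(7/2) * Real.sqrt x ≤ phi x := by
  have h := factor_ge x
  have h0 := Real.sqrt_nonneg x
  calc -(7/2) * Real.sqrt x = Real.sqrt x * (-(7/2)) := by ring
  _ ≤ phi x := mul_le_mul_of_nonneg_left h h0

lemma phi_nonpos (x : ℝ) : phi x ≤ 0 := by
  have := phi_le x; have := Real.sqrt_nonneg x; nlinarith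

lemma phi_measurable : Measurable phi :=
  Real.continuous_sqrt.measurable.mul
    (((Real.measurable_sin.comp Real.measurable_log).const_mul (3/2)).sub measurable_const)

lemma sqrt_exp' (a : ℝ) : Real.sqrt (Real.exp a) = Real.exp (a/2) := by
  rw [show Real.exp a = (Real.exp (a/2))^2 by rw [sq, ← Real.exp_add]; ring_nf,
    Real.sqrt_sq (Real.exp_nonneg _)]

lemma phi_exp (s : ℝ) : phi (Real.exp s) = Real.exp (s/2) * (3/2 * Real.sin s - 2) := by
  rw [phi, Real.log_exp, sqrt_exp']

lemma sin_diff (p q : ℝ) : |Real.sin p - Real.sin q| ≤ |p - q| := by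
  rw [Real.sin_sub_sin, abs_mul, abs_mul]
  have h1 : |Real.sin ((p - q) / 2)| ≤ |(p - q)/2| := Real.abs_sin_le_abs
  have h2 : |Real.cos ((p + q) / 2)| ≤ 1 := Real.abs_cos_le_one _
  have h3 : |(p-q)/2| = |p-q|/2 := by rw [abs_div]; norm_num
  have h4 : |(2:ℝ)| = 2 := by norm_num
  rw [h3] at h1
  nlinarith [abs_nonneg (Real.sin ((p-q)/2)), abs_nonneg (p - q),
    mul_le_mul h1 h2 (abs_nonneg _) (by positivity)]

lemma sqrt_diff (u t : ℝ) (hu : 0 < u) (ht : 0 ≤ u + t) :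
    |Real.sqrt (u+t) - Real.sqrt u| ≤ |t| / Real.sqrt u := by
  have hsu : 0 < Real.sqrt u := Real.sqrt_pos.2 hu
  have h1 : Real.sqrt (u+t) ^ 2 = u + t := Real.sq_sqrt ht
  have h2 : Real.sqrt u ^ 2 = u := Real.sq_sqrt hu.le
  have hpos : 0 < Real.sqrt (u+t) + Real.sqrt u := by
    have := Real.sqrt_nonneg (u+t); linarith
  have key : Real.sqrt (u+t) - Real.sqrt u = t / (Real.sqrt (u+t) + Real.sqrt u) := by
    rw [eq_div_iff hpos.ne']; nlinarith
  rw [key, abs_div, abs_of_pos hpos]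
  apply div_le_div_of_nonneg_left (abs_nonneg t) hsu
  have := Real.sqrt_nonneg (u+t); linarith

lemma abs_log_one_add (s : ℝ) (hs : |s| ≤ 1/2) : |Real.log (1+s)| ≤ 2*|s| := by
  obtain ⟨hs1, hs2⟩ := abs_le.1 hs
  have h1 : (0:ℝ) < 1 + s := by linarith
  rcases le_or_gt 0 s with h | h
  · rw [abs_of_nonneg (Real.log_nonneg (by linarith)), abs_of_nonneg h]
    have := Real.log_le_sub_one_of_pos h1; linarith
  · rw [abs_of_nonpos (Real.log_nonpos (by linarith) (by linarith)), abs_of_neg h]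
    have h2 : Real.log ((1+s)⁻¹) ≤ (1+s)⁻¹ - 1 :=
      Real.log_le_sub_one_of_pos (by positivity)
    rw [Real.log_inv] at h2
    have h3 : (1+s)⁻¹ ≤ 2 := by
      rw [inv_le_comm₀ h1 (by norm_num)]; linarith
    have h4 : (1+s)⁻¹ - 1 = -s * (1+s)⁻¹ := by field_simp; ring
    nlinarith

lemma log_diff (u t : ℝ) (hu : 0 < u) (ht : |t| ≤ u/2) :
    |Real.log (u+t) - Real.log u| ≤ 2*|t|/u := by
  obtain ⟨ht1, ht2⟩ := abs_le.1 ht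
  have h1 : 0 < u + t := by linarith
  have h2 : Real.log (u+t) - Real.log u = Real.log (1 + t/u) := by
    rw [← Real.log_div h1.ne' hu.ne']
    congr 1; field_simp
  rw [h2]
  have h3 : |t/u| ≤ 1/2 := by
    rw [abs_div, abs_of_pos hu, div_le_iff₀ hu]
    calc |t| ≤ u/2 := ht
    _ = 1/2 * u := by ring
  have := abs_log_one_add (t/u) h3
  calc |Real.log (1 + t/u)| ≤ 2 * |t/u| := this
  _ = 2*|t|/u := by rw [abs_div, abs_of_pos hu]; ring

lemma phi_diff (u t : ℝ) (hu : 1 ≤ u) (ht : |t| ≤ u/2) :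
    |phi (u+t) - phi u| ≤ 7 * |t| / Real.sqrt u := by
  have hu0 : 0 < u := by linarith
  obtain ⟨ht1, ht2⟩ := abs_le.1 ht
  have hut : 0 < u + t := by linarith
  have hsu : 0 < Real.sqrt u := Real.sqrt_pos.2 hu0
  have husq : Real.sqrt u * Real.sqrt u = u := Real.mul_self_sqrt hu0.le
  have e1 : phi (u+t) - phi u =
      (Real.sqrt (u+t) - Real.sqrt u) * (3/2 * Real.sin (Real.log (u+t)) - 2)
      + Real.sqrt u * (3/2) * (Real.sin (Real.log (u+t)) - Real.sin (Real.log u)) := by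
    simp only [phi]; ring
  have b1 : |Real.sqrt (u+t) - Real.sqrt u| ≤ |t| / Real.sqrt u := sqrt_diff u t hu0 hut.le
  have b2 : |3/2 * Real.sin (Real.log (u+t)) - 2| ≤ 7/2 := by
    have := Real.sin_le_one (Real.log (u+t)); have := Real.neg_one_le_sin (Real.log (u+t))
    rw [abs_le]; constructor <;> linarith
  have b3 : |Real.sin (Real.log (u+t)) - Real.sin (Real.log u)| ≤ 2*|t|/u := by
    calc |Real.sin (Real.log (u+t)) - Real.sin (Real.log u)|
        ≤ |Real.log (u+t) - Real.log u| := sin_diff _ _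
      _ ≤ 2*|t|/u := log_diff u t hu0 ht
  rw [e1]
  calc |_ + _| ≤ |(Real.sqrt (u+t) - Real.sqrt u) * (3/2 * Real.sin (Real.log (u+t)) - 2)|
        + |Real.sqrt u * (3/2) * (Real.sin (Real.log (u+t)) - Real.sin (Real.log u))| :=
      abs_add_le _ _
    _ ≤ (|t| / Real.sqrt u) * (7/2) + (Real.sqrt u * (3/2)) * (2*|t|/u) := by
      rw [abs_mul, abs_mul]
      have h5 : |Real.sqrt u * (3/2)| = Real.sqrt u * (3/2) := by
        rw [abs_of_nonneg]; positivity
      rw [h5]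
      gcongr
    _ ≤ 7 * |t| / Real.sqrt u := by
      have h6 : Real.sqrt u * (3/2) * (2*|t|/u) = 3 * |t| / Real.sqrt u := by
        rw [eq_div_iff hsu.ne']
        have hh : Real.sqrt u * (3/2) * (2*|t|/u) * Real.sqrt u
            = (Real.sqrt u * Real.sqrt u) * (3*|t|/u) := by ring
        rw [hh, husq]; field_simp
      rw [h6, div_mul_eq_mul_div, ← add_div, div_le_div_iff₀ hsu hsu]
      have := abs_nonneg t
      nlinarith

lemma exp_phi_integrable : IntegrableOn (fun y => Real.exp (phi y)) (Ioi (0:ℝ)) := by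
  have hmeas : Measurable (fun y => Real.exp (phi y)) := Real.measurable_exp.comp phi_measurable
  rw [← Ioc_union_Ioi_eq_Ioi (zero_le_one (α := ℝ))]
  apply IntegrableOn.union
  · apply Measure.integrableOn_of_bounded (M := 1) measure_Ioc_lt_top.ne
      hmeas.aestronglyMeasurable
    filter_upwards with a
    rw [Real.norm_eq_abs, abs_of_nonneg (Real.exp_nonneg _), ← Real.exp_zero]
    exact Real.exp_le_exp.2 (phi_nonpos a)
  · have base : IntegrableOn (fun x : ℝ => 10^5 * x ^ (-(5:ℝ)/2)) (Ioi 1) :=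
      (integrableOn_Ioi_rpow_of_lt (by norm_num) one_pos).const_mul _
    apply Integrable.mono' base hmeas.aestronglyMeasurable
    rw [ae_restrict_iff' measurableSet_Ioi]
    filter_upwards with x hx
    have hx1 : (1:ℝ) < x := hx
    have hx0 : (0:ℝ) < x := by linarith
    have hs : (0:ℝ) < Real.sqrt x := Real.sqrt_pos.2 hx0
    rw [Real.norm_eq_abs, abs_of_nonneg (Real.exp_nonneg _)]
    have h1 : Real.exp (phi x) ≤ Real.exp (-(1/2) * Real.sqrt x) :=
      Real.exp_le_exp.2 (phi_le x)
    have h2 : (Real.sqrt x / 10)^(5:ℕ) ≤ Real.exp ((1/2) * Real.sqrt x) := by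
      have ha : Real.sqrt x / 10 ≤ Real.exp (Real.sqrt x / 10) - 1 + 1 := by
        have := Real.add_one_le_exp (Real.sqrt x / 10); linarith
      calc (Real.sqrt x / 10)^(5:ℕ) ≤ (Real.exp (Real.sqrt x / 10))^(5:ℕ) := by
            apply pow_le_pow_left₀ (by positivity)
            have := Real.add_one_le_exp (Real.sqrt x / 10); linarith
        _ = Real.exp ((1/2) * Real.sqrt x) := by
            rw [← Real.exp_nat_mul]; norm_num; ring_nf
    have h3 : (Real.sqrt x)^(5:ℕ) = x ^ ((5:ℝ)/2) := by
      rw [Real.sqrt_eq_rpow, ← Real.rpow_natCast (x ^ ((1:ℝ)/2)) 5,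
        ← Real.rpow_mul hx0.le]
      norm_num
    have h4 : x ^ (-(5:ℝ)/2) = (x ^ ((5:ℝ)/2))⁻¹ := by
      rw [← Real.rpow_neg hx0.le]; norm_num
    have h5 : Real.exp (-(1/2) * Real.sqrt x) = (Real.exp ((1/2) * Real.sqrt x))⁻¹ := by
      rw [← Real.exp_neg]; ring_nf
    have h6 : (0:ℝ) < (Real.sqrt x / 10)^(5:ℕ) := by positivity
    have h7 : Real.exp (-(1/2) * Real.sqrt x) ≤ ((Real.sqrt x / 10)^(5:ℕ))⁻¹ := by
      rw [h5]
      exact inv_anti₀ h6 h2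
    have h8 : ((Real.sqrt x / 10)^(5:ℕ))⁻¹ = 10^5 * x ^ (-(5:ℝ)/2) := by
      rw [h4, ← h3]
      rw [div_pow]
      rw [inv_div]
      field_simp
    calc Real.exp (phi x) ≤ Real.exp (-(1/2) * Real.sqrt x) := h1
      _ ≤ ((Real.sqrt x / 10)^(5:ℕ))⁻¹ := h7
      _ = 10^5 * x ^ (-(5:ℝ)/2) := h8

def Iphi : ℝ := ∫ y in Ioi (0:ℝ), Real.exp (phi y)

lemma Iphi_pos : 0 < Iphi := by
  rw [Iphi, setIntegral_pos_iff_support_of_nonneg_ae _ exp_phi_integrable]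
  · have : Function.support (fun y => Real.exp (phi y)) = univ := by
      ext y; simp [Real.exp_ne_zero]
    rw [this, univ_inter]
    simp [Real.volume_Ioi]
  · filter_upwards with a using Real.exp_nonneg _

def fct : ℝ → ℝ := fun x => if x ≤ 0 then 0 else Iphi⁻¹ * Real.exp (phi x)

lemma fct_eq {x : ℝ} (hx : 0 < x) : fct x = Iphi⁻¹ * Real.exp (phi x) :=
  if_neg (not_le.2 hx)

lemma fct_nonneg (x : ℝ) : 0 ≤ fct x := by
  have hI := Iphi_pos
  rw [fct]; split
  · exact le_refl 0
  · positivity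

lemma fct_pos {x : ℝ} (hx : 0 < x) : 0 < fct x := by
  have hI := Iphi_pos
  rw [fct_eq hx]; positivity

lemma fct_le (x : ℝ) : fct x ≤ Iphi⁻¹ := by
  have hI := Iphi_pos
  rw [fct]; split
  · positivity
  · have h1 : Real.exp (phi x) ≤ 1 := by
      rw [← Real.exp_zero]
      exact Real.exp_le_exp.2 (phi_nonpos x)
    calc Iphi⁻¹ * Real.exp (phi x) ≤ Iphi⁻¹ * 1 :=
        mul_le_mul_of_nonneg_left h1 (by positivity)
      _ = Iphi⁻¹ := mul_one _

lemma fct_measurable : Measurable fct := by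
  apply Measurable.ite (measurableSet_Iic (a := (0:ℝ))) measurable_const
  exact (Real.measurable_exp.comp phi_measurable).const_mul _

lemma fct_integral : ∫ y in Ioi (0:ℝ), fct y = 1 := by
  have h1 : ∫ y in Ioi (0:ℝ), fct y = ∫ y in Ioi (0:ℝ), Iphi⁻¹ * Real.exp (phi y) := by
    apply setIntegral_congr_fun measurableSet_Ioi
    intro x hx
    exact fct_eq hx
  rw [h1, integral_const_mul, ← Iphi]
  exact inv_mul_cancel₀ Iphi_pos.ne'

lemma fct_isDensity : IsDensity fct :=
  ⟨fct_measurable, fun x hx => if_pos hx.le, fct_nonneg, fct_integral⟩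

lemma tendsto_sqrt_atTop' : Tendsto Real.sqrt atTop atTop := by
  rw [tendsto_atTop]
  intro b
  filter_upwards [eventually_ge_atTop ((max 0 b)^2)] with x hx
  calc b ≤ max 0 b := le_max_right _ _
    _ = Real.sqrt ((max 0 b)^2) := (Real.sqrt_sq (le_max_left _ _)).symm
    _ ≤ Real.sqrt x := Real.sqrt_le_sqrt hx

lemma fct_longTailed : LongTailedDensity fct := by
  constructor
  · filter_upwards [eventually_gt_atTop (0:ℝ)] with x hx using fct_pos hx
  · intro t
    have h0 : Tendsto (fun x => phi (x+t) - phi x) atTop (nhds 0) := by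
      apply squeeze_zero_norm' (a := fun x => 7 * |t| / Real.sqrt x)
      · filter_upwards [eventually_ge_atTop (max 1 (2*|t|))] with x hx
        have hx1 : (1:ℝ) ≤ x := le_trans (le_max_left _ _) hx
        have hx2 : |t| ≤ x/2 := by
          have := le_trans (le_max_right _ _) hx; linarith
        simpa [Real.norm_eq_abs] using phi_diff x t hx1 hx2
      · have h1 : Tendsto (fun x : ℝ => (Real.sqrt x)⁻¹) atTop (nhds 0) :=
          tendsto_sqrt_atTop'.inv_tendsto_atTop
        have h2 := h1.const_mul (7 * |t|)
        simpa [div_eq_mul_inv] using h2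
    have h1 : Tendsto (fun x => Real.exp (phi (x+t) - phi x)) atTop (nhds 1) := by
      have := (Real.continuous_exp.tendsto 0).comp h0
      simpa [Function.comp_def] using this
    apply h1.congr'
    filter_upwards [eventually_ge_atTop (2*|t| + 1)] with x hx
    have hx0 : 0 < x := by have := abs_nonneg t; linarith
    have hxt : 0 < x + t := by
      have h := neg_abs_le t; linarith
    rw [fct_eq hxt, fct_eq hx0, Real.exp_sub,
      mul_div_mul_left _ _ (inv_ne_zero Iphi_pos.ne')]

lemma exp_pi_div_two_lt : Real.exp (Real.pi/2) < 6.4 := by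
  have hpi : Real.pi < 3.15 := Real.pi_lt_d2
  have h1 : Real.exp (Real.pi/2) < Real.exp 1.575 := Real.exp_lt_exp.2 (by linarith)
  have h2 : Real.exp 1.575 = Real.exp 1 * Real.exp 0.575 := by
    rw [← Real.exp_add]; norm_num
  have h3 : Real.exp 0.575 ≤ (0.425:ℝ)⁻¹ := by
    have ha : (0.425:ℝ) ≤ Real.exp (-0.575) := by
      have := Real.add_one_le_exp (-0.575 : ℝ); linarith
    have hb : Real.exp (-0.575) = (Real.exp 0.575)⁻¹ := Real.exp_neg _
    rw [hb] at ha
    calc Real.exp 0.575 = ((Real.exp 0.575)⁻¹)⁻¹ := (inv_inv _).symm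
      _ ≤ (0.425:ℝ)⁻¹ := by
        apply inv_anti₀ (by norm_num) ha
  have h4 : Real.exp 1 < 2.7182818286 := Real.exp_one_lt_d9
  have h5 : (0:ℝ) < Real.exp 0.575 := Real.exp_pos _
  calc Real.exp (Real.pi/2) < Real.exp 1 * Real.exp 0.575 := by rw [← h2]; exact h1
    _ ≤ Real.exp 1 * (0.425:ℝ)⁻¹ := by
        apply mul_le_mul_of_nonneg_left h3 (Real.exp_pos 1).le
    _ < 2.7182818286 * (0.425:ℝ)⁻¹ := by
        apply mul_lt_mul_of_pos_right h4 (by norm_num)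
    _ < 6.4 := by norm_num

lemma sin_three_pi_div_two' : Real.sin (3*Real.pi/2) = -1 := by
  rw [show 3*Real.pi/2 = Real.pi + Real.pi/2 by ring, Real.sin_add, Real.sin_pi,
    Real.cos_pi, Real.sin_pi_div_two]
  ring

lemma fct_not_almostDecreasing : ¬ AlmostDecreasing fct := by
  rintro ⟨x₀, hx₀0, hpos, C, hC⟩
  obtain ⟨k, hk⟩ := exists_nat_gt (max x₀ (2*|C| + 2))
  have hkx : x₀ < k := lt_of_le_of_lt (le_max_left _ _) hk
  have hkC : 2*|C| + 2 < k := lt_of_le_of_lt (le_max_right _ _) hk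
  have hk0 : (0:ℝ) ≤ k := by positivity
  have hpi := Real.pi_gt_three
  obtain ⟨s, hs⟩ : ∃ s : ℝ, s = 3*Real.pi/2 + (k:ℝ)*(2*Real.pi) := ⟨_, rfl⟩
  have hs_nonneg : 0 ≤ s := by rw [hs]; positivity
  have hsk : 6*(k:ℝ) ≤ s := by
    rw [hs]
    nlinarith [Real.pi_pos]
  obtain ⟨x, hx⟩ : ∃ x : ℝ, x = Real.exp s := ⟨_, rfl⟩
  obtain ⟨y, hy⟩ : ∃ y : ℝ, y = Real.exp (s + Real.pi) := ⟨_, rfl⟩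
  have hx0 : 0 < x := hx ▸ Real.exp_pos _
  have hy0 : 0 < y := hy ▸ Real.exp_pos _
  have hxk : (k:ℝ) ≤ x := by
    have := Real.add_one_le_exp s
    calc (k:ℝ) ≤ s := by linarith
      _ ≤ x := by rw [hx]; linarith
  have hx₀x : x₀ ≤ x := le_trans hkx.le hxk
  have hxy : x ≤ y := by
    rw [hx, hy]; exact Real.exp_le_exp.2 (by linarith [Real.pi_pos])
  -- compute phi x and phi y
  have hsins : Real.sin s = -1 := by
    rw [hs]
    rw [show 3*Real.pi/2 + (k:ℝ)*(2*Real.pi) = 3*Real.pi/2 + ((k:ℤ):ℝ)*(2*Real.pi) by push_cast; ring,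
      Real.sin_add_int_mul_two_pi]
    exact sin_three_pi_div_two'
  have hsiny : Real.sin (s + Real.pi) = 1 := by
    rw [Real.sin_add_pi, hsins]; ring
  have hphix : phi x = -(7/2) * Real.exp (s/2) := by
    rw [hx, phi_exp, hsins]; ring
  have hphiy : phi y = -(1/2) * (Real.exp (s/2) * Real.exp (Real.pi/2)) := by
    rw [hy, phi_exp, hsiny, ← Real.exp_add]
    ring_nf
  have hdiff : (3/10) * Real.exp (s/2) ≤ phi y - phi x := by
    rw [hphix, hphiy]
    have h1 : Real.exp (Real.pi/2) < 6.4 := exp_pi_div_two_lt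
    have h2 : (0:ℝ) < Real.exp (s/2) := Real.exp_pos _
    nlinarith
  have hratio : fct y / fct x = Real.exp (phi y - phi x) := by
    rw [fct_eq hy0, fct_eq hx0, Real.exp_sub,
      mul_div_mul_left _ _ (inv_ne_zero Iphi_pos.ne')]
  have hes : 3*(k:ℝ) ≤ Real.exp (s/2) := by
    have := Real.add_one_le_exp (s/2)
    linarith
  have hfinal : C < fct y / fct x := by
    rw [hratio]
    have h1 : (3/10) * Real.exp (s/2) + 1 ≤ Real.exp (phi y - phi x) := by
      have := Real.add_one_le_exp ((3/10) * Real.exp (s/2))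
      have := Real.exp_le_exp.2 hdiff
      linarith
    have h2 : C ≤ |C| := le_abs_self C
    nlinarith
  exact absurd (hC x y hx₀x hxy) (not_le.2 hfinal)

lemma cos_log_two_le : Real.cos (Real.log 2) ≤ 0.772 := by
  have h1 := Real.log_two_gt_d9
  have h2 := Real.log_two_lt_d9
  have hL : (0:ℝ) < Real.log 2 := Real.log_pos one_lt_two
  have hb : |Real.log 2| ≤ 1 := by rw [abs_of_pos hL]; linarith
  have hc := Real.cos_bound hb
  rw [abs_of_pos hL] at hc
  rw [abs_le] at hc
  have hL2 : (0.6931471803:ℝ)^2 ≤ (Real.log 2)^2 := by nlinarith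
  have hL2' : (Real.log 2)^2 ≤ (0.6931471808:ℝ)^2 := by nlinarith
  have hL4 : (Real.log 2)^4 ≤ (0.6931471808:ℝ)^4 := by
    have h := mul_self_le_mul_self (sq_nonneg (Real.log 2)) hL2'
    nlinarith [h]
  have hnum : (1:ℝ) - (0.6931471803:ℝ)^2/2 + (0.6931471808:ℝ)^4*(5/96) ≤ 0.772 := by norm_num
  linarith [hc.2]

lemma sqrt_two_ge : (1.414:ℝ) ≤ Real.sqrt 2 := by
  nlinarith [Real.sq_sqrt (by norm_num : (0:ℝ) ≤ 2), Real.sqrt_nonneg 2]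

lemma exp_log_two_half : Real.exp (Real.log 2 / 2) = Real.sqrt 2 := by
  rw [← sqrt_exp', Real.exp_log two_pos]

set_option maxHeartbeats 1000000 in
lemma fct_not_subexp : ¬ SubexpDensity fct := by
  rintro ⟨-, hconv⟩
  have h3 : ∀ᶠ x in atTop, (∫ y in (0:ℝ)..x, fct (x-y) * fct y) / fct x < 3 :=
    hconv.eventually_lt_const (by norm_num)
  rw [eventually_atTop] at h3
  obtain ⟨N, hN⟩ := h3
  have hI := Iphi_pos
  have hpi := Real.pi_gt_three
  have hA : (0:ℝ) < Real.exp 2 := Real.exp_pos _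
  obtain ⟨k, hk⟩ := exists_nat_gt (max (max N 9) ((100/57) * (3 * Real.exp 2 * Iphi) + 1))
  have hkN : N < (k:ℝ) := lt_of_le_of_lt (le_trans (le_max_left _ _) (le_max_left _ _)) hk
  have hk9 : (9:ℝ) < k := lt_of_le_of_lt (le_trans (le_max_right _ _) (le_max_left _ _)) hk
  have hkI : (100/57) * (3 * Real.exp 2 * Iphi) + 1 < k :=
    lt_of_le_of_lt (le_max_right _ _) hk
  have hk0 : (0:ℝ) ≤ k := by positivity
  obtain ⟨s, hs⟩ : ∃ s : ℝ, s = Real.pi/2 + (k:ℝ)*(2*Real.pi) := ⟨_, rfl⟩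
  obtain ⟨u, hu⟩ : ∃ u : ℝ, u = Real.exp s := ⟨_, rfl⟩
  obtain ⟨x, hx⟩ : ∃ x : ℝ, x = 2*u := ⟨_, rfl⟩
  have hs6 : 6*(k:ℝ) ≤ s := by
    rw [hs]; nlinarith [Real.pi_pos]
  have hs0 : 0 ≤ s := by linarith
  have hu6 : 6*(k:ℝ) ≤ u := by
    have := Real.add_one_le_exp s
    rw [hu]; linarith
  have hu49 : (49:ℝ) ≤ u := by linarith
  have hu1 : (1:ℝ) ≤ u := by linarith
  have hu0 : (0:ℝ) < u := by linarith
  have hx0 : (0:ℝ) < x := by rw [hx]; linarith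
  have hsqu : Real.sqrt u = Real.exp (s/2) := by rw [hu, sqrt_exp']
  have hsq7 : (7:ℝ) ≤ Real.sqrt u := by
    have h49 : Real.sqrt 49 ≤ Real.sqrt u := Real.sqrt_le_sqrt hu49
    rwa [show (49:ℝ) = 7^2 by norm_num, Real.sqrt_sq (by norm_num : (0:ℝ) ≤ 7)] at h49
  have hxN : N ≤ x := by rw [hx]; linarith
  have hkey := hN x hxN
  -- pointwise lower bound on Ioc u (u+1)
  have hb : ∀ y ∈ Ioc u (u+1), Iphi⁻¹^2 * Real.exp (2*phi u - 2) ≤ fct (x - y) * fct y := by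
    intro y hy
    obtain ⟨hy1, hy2⟩ := hy
    have hy0 : 0 < y := by linarith
    have hxy0 : 0 < x - y := by rw [hx]; linarith
    have d1 : |phi y - phi u| ≤ 1 := by
      have h := phi_diff u (y - u) hu1 (by rw [abs_of_nonneg (by linarith)]; linarith)
      rw [show u + (y - u) = y by ring] at h
      have habs : |y - u| ≤ 1 := by rw [abs_of_nonneg (by linarith)]; linarith
      calc |phi y - phi u| ≤ 7 * |y-u| / Real.sqrt u := h
        _ ≤ 7 * 1 / 7 := by
            apply div_le_div₀ (by norm_num) (by nlinarith [abs_nonneg (y-u)]) (by norm_num) hsq7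
        _ = 1 := by norm_num
    have d2 : |phi (x - y) - phi u| ≤ 1 := by
      have h := phi_diff u (u - y) hu1 (by rw [abs_of_nonpos (by linarith)]; linarith)
      rw [show u + (u - y) = 2*u - y by ring] at h
      rw [show (2:ℝ)*u - y = x - y by rw [hx]] at h
      have habs : |u - y| ≤ 1 := by rw [abs_of_nonpos (by linarith)]; linarith
      calc |phi (x - y) - phi u| ≤ 7 * |u-y| / Real.sqrt u := h
        _ ≤ 7 * 1 / 7 := by
            apply div_le_div₀ (by norm_num) (by nlinarith [abs_nonneg (u-y)]) (by norm_num) hsq7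
        _ = 1 := by norm_num
    have e1 : Iphi⁻¹ * Real.exp (phi u - 1) ≤ fct y := by
      rw [fct_eq hy0]
      apply mul_le_mul_of_nonneg_left _ (by positivity)
      apply Real.exp_le_exp.2
      have := abs_le.1 d1
      linarith [this.1]
    have e2 : Iphi⁻¹ * Real.exp (phi u - 1) ≤ fct (x - y) := by
      rw [fct_eq hxy0]
      apply mul_le_mul_of_nonneg_left _ (by positivity)
      apply Real.exp_le_exp.2
      have := abs_le.1 d2
      linarith [this.1]
    calc Iphi⁻¹^2 * Real.exp (2*phi u - 2)
        = (Iphi⁻¹ * Real.exp (phi u - 1)) * (Iphi⁻¹ * Real.exp (phi u - 1)) := by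
          rw [show 2*phi u - 2 = (phi u - 1) + (phi u - 1) by ring, Real.exp_add]; ring
      _ ≤ fct (x - y) * fct y := by
          apply mul_le_mul e2 e1 (by positivity) (fct_nonneg _)
  -- integral lower bound
  have hgmeas : Measurable (fun y => fct (x - y) * fct y) :=
    (fct_measurable.comp (measurable_const.sub measurable_id)).mul fct_measurable
  have hgint : IntegrableOn (fun y => fct (x - y) * fct y) (Ioc 0 x) := by
    apply Measure.integrableOn_of_bounded (M := Iphi⁻¹ * Iphi⁻¹) measure_Ioc_lt_top.ne
      hgmeas.aestronglyMeasurable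
    filter_upwards with a
    rw [Real.norm_eq_abs, abs_of_nonneg (mul_nonneg (fct_nonneg _) (fct_nonneg _))]
    exact mul_le_mul (fct_le _) (fct_le _) (fct_nonneg _) (by positivity)
  have hsub : Ioc u (u+1) ⊆ Ioc 0 x := Ioc_subset_Ioc (by linarith) (by rw [hx]; linarith)
  have step1 : ∫ y in Ioc u (u+1), fct (x - y) * fct y ≤ ∫ y in Ioc 0 x, fct (x - y) * fct y := by
    apply setIntegral_mono_set hgint
    · filter_upwards with a using mul_nonneg (fct_nonneg _) (fct_nonneg _)
    · exact HasSubset.Subset.eventuallyLE hsub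
  have step2 : Iphi⁻¹^2 * Real.exp (2*phi u - 2) ≤ ∫ y in Ioc u (u+1), fct (x - y) * fct y := by
    have h := setIntegral_ge_of_const_le measurableSet_Ioc measure_Ioc_lt_top.ne hb
      (hgint.mono_set hsub)
    have hvol : (volume (Ioc u (u+1))).toReal = 1 := by
      rw [Real.volume_Ioc]
      norm_num
    simp only [Measure.real, hvol, one_smul] at h
    exact h
  have step3 : (∫ y in (0:ℝ)..x, fct (x - y) * fct y) = ∫ y in Ioc 0 x, fct (x - y) * fct y :=
    intervalIntegral.integral_of_le hx0.le
  -- compute phi u and bound phi x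
  have hsins : Real.sin s = 1 := by
    rw [hs, show Real.pi/2 + (k:ℝ)*(2*Real.pi) = Real.pi/2 + ((k:ℤ):ℝ)*(2*Real.pi) by push_cast; ring,
      Real.sin_add_int_mul_two_pi, Real.sin_pi_div_two]
  have hphiu : phi u = -(1/2) * Real.exp (s/2) := by
    rw [hu, phi_exp, hsins]; ring
  have hx2 : x = Real.exp (Real.log 2 + s) := by
    rw [hx, hu, Real.exp_add, Real.exp_log two_pos]
  have hsinx : Real.sin (Real.log 2 + s) = Real.cos (Real.log 2) := by
    rw [hs, show Real.log 2 + (Real.pi/2 + (k:ℝ)*(2*Real.pi))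
        = (Real.log 2 + Real.pi/2) + ((k:ℤ):ℝ)*(2*Real.pi) by push_cast; ring,
      Real.sin_add_int_mul_two_pi, Real.sin_add_pi_div_two]
  have hphix : phi x ≤ -(119/100) * Real.exp (s/2) := by
    rw [hx2, phi_exp, hsinx]
    have hE : Real.exp ((Real.log 2 + s)/2) = Real.sqrt 2 * Real.exp (s/2) := by
      rw [show (Real.log 2 + s)/2 = Real.log 2/2 + s/2 by ring, Real.exp_add, exp_log_two_half]
    rw [hE]
    have hc : 3/2 * Real.cos (Real.log 2) - 2 ≤ -(842/1000) := by
      have := cos_log_two_le; linarith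
    have hs2 : (1.414:ℝ) ≤ Real.sqrt 2 := sqrt_two_ge
    have hE0 : (0:ℝ) < Real.exp (s/2) := Real.exp_pos _
    have hprod : Real.sqrt 2 * (3/2 * Real.cos (Real.log 2) - 2) ≤ -(119/100) := by
      nlinarith [mul_nonneg (by linarith : (0:ℝ) ≤ Real.sqrt 2 - 1.414)
        (by linarith : (0:ℝ) ≤ -(3/2 * Real.cos (Real.log 2) - 2))]
    calc Real.sqrt 2 * Real.exp (s/2) * (3/2 * Real.cos (Real.log 2) - 2)
        = (Real.sqrt 2 * (3/2 * Real.cos (Real.log 2) - 2)) * Real.exp (s/2) := by ring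
      _ ≤ -(119/100) * Real.exp (s/2) := mul_le_mul_of_nonneg_right hprod hE0.le
  have hexps : 3*(k:ℝ) ≤ Real.exp (s/2) := by
    have := Real.add_one_le_exp (s/2)
    linarith
  -- final chain
  have hfrac : Iphi⁻¹ * Real.exp (2*phi u - 2 - phi x)
      = Iphi⁻¹^2 * Real.exp (2*phi u - 2) / fct x := by
    rw [fct_eq hx0, Real.exp_sub]
    field_simp
  have hlow : (3:ℝ) ≤ Iphi⁻¹ * Real.exp (2*phi u - 2 - phi x) := by
    have harg : (19/100) * Real.exp (s/2) - 2 ≤ 2*phi u - 2 - phi x := by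
      rw [hphiu]
      have hE0 : (0:ℝ) < Real.exp (s/2) := Real.exp_pos _
      linarith [hphix]
    have h5 : Real.exp ((19/100) * Real.exp (s/2) - 2) ≤ Real.exp (2*phi u - 2 - phi x) :=
      Real.exp_le_exp.2 harg
    have h6 : (57/100) * (k:ℝ) * (Real.exp 2)⁻¹ ≤ Real.exp ((19/100) * Real.exp (s/2) - 2) := by
      rw [Real.exp_sub]
      rw [div_eq_mul_inv]
      apply mul_le_mul_of_nonneg_right _ (by positivity)
      have := Real.add_one_le_exp ((19/100) * Real.exp (s/2))
      nlinarith
    have h7 : 3 * Iphi * Real.exp 2 ≤ (57/100) * (k:ℝ) := by nlinarith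
    have h8 : (3:ℝ) ≤ Iphi⁻¹ * ((57/100) * (k:ℝ) * (Real.exp 2)⁻¹) := by
      rw [show Iphi⁻¹ * ((57/100) * (k:ℝ) * (Real.exp 2)⁻¹)
          = ((57/100) * (k:ℝ)) * (Iphi⁻¹ * (Real.exp 2)⁻¹) by ring]
      have h9 : (3:ℝ) = (3 * Iphi * Real.exp 2) * (Iphi⁻¹ * (Real.exp 2)⁻¹) := by
        field_simp
      rw [h9]
      apply mul_le_mul_of_nonneg_right h7 (by positivity)
    calc (3:ℝ) ≤ Iphi⁻¹ * ((57/100) * (k:ℝ) * (Real.exp 2)⁻¹) := h8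
      _ ≤ Iphi⁻¹ * Real.exp ((19/100) * Real.exp (s/2) - 2) := by
          apply mul_le_mul_of_nonneg_left h6 (by positivity)
      _ ≤ Iphi⁻¹ * Real.exp (2*phi u - 2 - phi x) := by
          apply mul_le_mul_of_nonneg_left h5 (by positivity)
  have hfct : 0 < fct x := fct_pos hx0
  have hchain : (3:ℝ) ≤ (∫ y in (0:ℝ)..x, fct (x - y) * fct y) / fct x := by
    calc (3:ℝ) ≤ Iphi⁻¹ * Real.exp (2*phi u - 2 - phi x) := hlow
      _ = Iphi⁻¹^2 * Real.exp (2*phi u - 2) / fct x := hfrac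
      _ ≤ (∫ y in Ioc 0 x, fct (x - y) * fct y) / fct x := by
          apply div_le_div_of_nonneg_right ?_ hfct.le
          · linarith [step1, step2]
      _ = (∫ y in (0:ℝ)..x, fct (x - y) * fct y) / fct x := by rw [step3]
  linarith [hkey]


theorem longtailed_not_subexponential_density_not_almost_decreasing :
    ∃ f : ℝ → ℝ, IsDensity f ∧ LongTailedDensity f ∧ ¬ SubexpDensity f ∧
      ¬ AlmostDecreasing f :=
  ⟨fct, fct_isDensity, fct_longTailed, fct_not_subexp, fct_not_almostDecreasing⟩
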